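/- With ψ defined by ψ(𝒦) = (|𝒦| − 1)·I(X; X_∅) − H(X_(2^𝒦)|X) + Σ_{𝒜⊆𝒦} H(X_𝒜 | X_(2^𝒜−{𝒜})) for jointly distributed finite random variables X and (X_𝒜)_{𝒜⊆{1,…,L}}, ψ is nondecreasing: if 𝒮 ⊂ 𝒯 ⊆ {1,…,L} then ψ(𝒮) ≤ ψ(𝒯). -/

import Mathlib

open scoped BigOperators

namespace MDC

structure FinProb (Ω : Type*) [Fintype Ω] where
  μ : Ω → ℝ
  nonneg : ∀ ω, 0 ≤ μ ω
  sum_one : ∑ ω, μ ω = 1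

variable {Ω : Type*} [Fintype Ω]

/-- Probability that the random variable `f` takes the value `a`. -/
noncomputable def pr (P : FinProb Ω) {A : Type*} [DecidableEq A] (f : Ω → A) (a : A) : ℝ :=
  ∑ ω, if f ω = a then P.μ ω else 0

/-- Shannon entropy (base 2) of a finite random variable. -/
noncomputable def H (P : FinProb Ω) {A : Type*} [Fintype A] [DecidableEq A] (f : Ω → A) : ℝ :=
  - ∑ a, pr P f a * Real.logb 2 (pr P f a)

/-- Conditional entropy H(f|g). -/
noncomputable def Hcond (P : FinProb Ω) {A B : Type*} [Fintype A] [DecidableEq A]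
    [Fintype B] [DecidableEq B] (f : Ω → A) (g : Ω → B) : ℝ :=
  H P (fun ω => (f ω, g ω)) - H P g

/-- Mutual information I(f;g). -/
noncomputable def MI (P : FinProb Ω) {A B : Type*} [Fintype A] [DecidableEq A]
    [Fintype B] [DecidableEq B] (f : Ω → A) (g : Ω → B) : ℝ :=
  H P f + H P g - H P (fun ω => (f ω, g ω))

/-- Conditional mutual information I(f;g|h). -/
noncomputable def CMI (P : FinProb Ω) {A B C : Type*} [Fintype A] [DecidableEq A]
    [Fintype B] [DecidableEq B] [Fintype C] [DecidableEq C]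
    (f : Ω → A) (g : Ω → B) (h : Ω → C) : ℝ :=
  H P (fun ω => (f ω, h ω)) + H P (fun ω => (g ω, h ω))
    - H P (fun ω => (f ω, g ω, h ω)) - H P h

/-- Independence of two finite random variables. -/
def Indep (P : FinProb Ω) {A B : Type*} [DecidableEq A] [DecidableEq B]
    (f : Ω → A) (g : Ω → B) : Prop :=
  ∀ a b, pr P (fun ω => (f ω, g ω)) (a, b) = pr P f a * pr P g b

/-- Conditional independence of `f` and `g` given `h` (a Markov chain f − h − g). -/
def CondIndep (P : FinProb Ω) {A B C : Type*} [DecidableEq A] [DecidableEq B] [DecidableEq C]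
    (f : Ω → A) (g : Ω → B) (h : Ω → C) : Prop :=
  ∀ a b c, pr P h c * pr P (fun ω => (f ω, g ω, h ω)) (a, b, c) =
    pr P (fun ω => (f ω, h ω)) (a, c) * pr P (fun ω => (g ω, h ω)) (b, c)

/-- Binary entropy function. -/
noncomputable def Hb (p : ℝ) : ℝ := -(p * Real.logb 2 p) - (1 - p) * Real.logb 2 (1 - p)

/-- Expected Hamming distortion between two random variables. -/
noncomputable def Edist (P : FinProb Ω) {A : Type*} [DecidableEq A] (f g : Ω → A) : ℝ :=
  ∑ ω, P.μ ω * (if f ω = g ω then 0 else 1)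

end MDC

open MDC

section Aux

variable {Ω : Type*} [Fintype Ω] (P : FinProb Ω)

lemma pr_nonneg {A : Type*} [DecidableEq A] (f : Ω → A) (a : A) : 0 ≤ pr P f a := by
  apply Finset.sum_nonneg; intro ω _; split <;> simp [P.nonneg]

lemma sum_pr {A : Type*} [Fintype A] [DecidableEq A] (f : Ω → A) : ∑ a, pr P f a = 1 := by
  unfold pr
  rw [Finset.sum_comm]
  rw [show ∑ ω, ∑ a, (if f ω = a then P.μ ω else 0) = ∑ ω, P.μ ω from
    Finset.sum_congr rfl (fun ω _ => by simp), P.sum_one]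

lemma marg_fst {A B C : Type*} [DecidableEq A] [DecidableEq B] [Fintype A] [DecidableEq C]
    (f : Ω → A) (g : Ω → B) (h : Ω → C) (b : B) (c : C) :
    pr P (fun ω => (g ω, h ω)) (b, c) = ∑ a, pr P (fun ω => (f ω, g ω, h ω)) (a, b, c) := by
  unfold pr
  rw [Finset.sum_comm]
  refine Finset.sum_congr rfl (fun ω _ => ?_)
  by_cases hb : g ω = b ∧ h ω = c
  · simp [Prod.ext_iff, hb.1, hb.2]
  · simp only [Prod.ext_iff] at *
    rw [if_neg hb]
    symm; apply Finset.sum_eq_zero; intro a _; rw [if_neg]; tauto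

lemma marg_snd {A B C : Type*} [DecidableEq A] [DecidableEq B] [Fintype B] [DecidableEq C]
    (f : Ω → A) (g : Ω → B) (h : Ω → C) (a : A) (c : C) :
    pr P (fun ω => (f ω, h ω)) (a, c) = ∑ b, pr P (fun ω => (f ω, g ω, h ω)) (a, b, c) := by
  unfold pr
  rw [Finset.sum_comm]
  refine Finset.sum_congr rfl (fun ω _ => ?_)
  by_cases hb : f ω = a ∧ h ω = c
  · simp [Prod.ext_iff, hb.1, hb.2]
  · simp only [Prod.ext_iff] at *
    rw [if_neg hb]
    symm; apply Finset.sum_eq_zero; intro b _; rw [if_neg]; tauto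

lemma marg_pair {A B C : Type*} [DecidableEq A] [Fintype A] [DecidableEq B] [Fintype B] [DecidableEq C]
    (f : Ω → A) (g : Ω → B) (h : Ω → C) (c : C) :
    pr P h c = ∑ a, ∑ b, pr P (fun ω => (f ω, g ω, h ω)) (a, b, c) := by
  unfold pr
  have hsw : ∀ (F : A → B → Ω → ℝ), ∑ a, ∑ b, ∑ ω, F a b ω = ∑ ω, ∑ a, ∑ b, F a b ω := by
    intro F
    calc ∑ a, ∑ b, ∑ ω, F a b ω = ∑ a, ∑ ω, ∑ b, F a b ω :=
          Finset.sum_congr rfl (fun a _ => Finset.sum_comm)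
      _ = ∑ ω, ∑ a, ∑ b, F a b ω := Finset.sum_comm
  rw [hsw]
  refine Finset.sum_congr rfl (fun ω _ => ?_)
  by_cases hb : h ω = c
  · simp [Prod.ext_iff, hb, ite_and, Finset.sum_ite_eq, Finset.sum_ite_eq']
  · simp only [Prod.ext_iff] at *
    rw [if_neg hb]
    symm; apply Finset.sum_eq_zero; intro a _
    apply Finset.sum_eq_zero; intro b _; rw [if_neg]; tauto

lemma marg2 {B C : Type*} [DecidableEq B] [Fintype B] [DecidableEq C]
    (g : Ω → B) (h : Ω → C) (c : C) :
    pr P h c = ∑ b, pr P (fun ω => (g ω, h ω)) (b, c) := by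
  unfold pr
  rw [Finset.sum_comm]
  refine Finset.sum_congr rfl (fun ω _ => ?_)
  by_cases hb : h ω = c
  · simp [Prod.ext_iff, hb]
  · simp only [Prod.ext_iff] at *
    rw [if_neg hb]
    symm; apply Finset.sum_eq_zero; intro b _; rw [if_neg]; tauto

lemma pr_le_pair_snd {A B C : Type*} [DecidableEq A] [DecidableEq B] [Fintype B] [DecidableEq C]
    (f : Ω → A) (g : Ω → B) (h : Ω → C) (a : A) (b : B) (c : C) :
    pr P (fun ω => (f ω, g ω, h ω)) (a, b, c) ≤ pr P (fun ω => (f ω, h ω)) (a, c) := by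
  rw [marg_snd P f g h a c]
  exact Finset.single_le_sum
    (f := fun b' => pr P (fun ω => (f ω, g ω, h ω)) (a, b', c))
    (fun b' _ => pr_nonneg P _ _) (Finset.mem_univ b)

lemma pr_le_pair_fst {A B C : Type*} [DecidableEq A] [Fintype A] [DecidableEq B] [DecidableEq C]
    (f : Ω → A) (g : Ω → B) (h : Ω → C) (a : A) (b : B) (c : C) :
    pr P (fun ω => (f ω, g ω, h ω)) (a, b, c) ≤ pr P (fun ω => (g ω, h ω)) (b, c) := by
  rw [marg_fst P f g h b c]
  exact Finset.single_le_sum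
    (f := fun a' => pr P (fun ω => (f ω, g ω, h ω)) (a', b, c))
    (fun a' _ => pr_nonneg P _ _) (Finset.mem_univ a)

lemma pr_pair_le {A C : Type*} [DecidableEq A] [Fintype A] [DecidableEq C]
    (f : Ω → A) (h : Ω → C) (a : A) (c : C) :
    pr P (fun ω => (f ω, h ω)) (a, c) ≤ pr P h c := by
  rw [marg2 P f h c]
  exact Finset.single_le_sum
    (f := fun a' => pr P (fun ω => (f ω, h ω)) (a', c))
    (fun a' _ => pr_nonneg P _ _) (Finset.mem_univ a)

lemma pr_comp_inj {A B : Type*} [DecidableEq A] [DecidableEq B] (φ : A → B)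
    (hφ : Function.Injective φ) (f : Ω → A) (a : A) :
    pr P (fun ω => φ (f ω)) (φ a) = pr P f a := by
  unfold pr
  refine Finset.sum_congr rfl fun ω _ => ?_
  by_cases hc : f ω = a
  · simp [hc]
  · rw [if_neg hc, if_neg (fun hh => hc (hφ hh))]

lemma H_comp_inj {A B : Type*} [Fintype A] [DecidableEq A] [Fintype B] [DecidableEq B]
    (φ : A → B) (hφ : Function.Injective φ) (f : Ω → A) :
    H P (fun ω => φ (f ω)) = H P f := by
  unfold H
  congr 1
  have h0 : ∀ b ∈ Finset.univ, b ∉ Finset.univ.image φ →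
      pr P (fun ω => φ (f ω)) b * Real.logb 2 (pr P (fun ω => φ (f ω)) b) = 0 := by
    intro b _ hb
    have hz : pr P (fun ω => φ (f ω)) b = 0 :=
      Finset.sum_eq_zero fun ω _ => if_neg fun hc => hb (Finset.mem_image.mpr
        ⟨f ω, Finset.mem_univ _, hc⟩)
    simp [hz]
  rw [← Finset.sum_subset (Finset.subset_univ (Finset.univ.image φ)) h0,
    Finset.sum_image (fun a _ a' _ hh => hφ hh)]
  exact Finset.sum_congr rfl fun a _ => by rw [pr_comp_inj P φ hφ f a]

lemma gibbs_term (p q r m : ℝ) (hp : 0 ≤ p) (hq : p ≤ q) (hr : p ≤ r) (hm : q ≤ m) :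
    (p - q * r / m) / Real.log 2 ≤
      p * Real.logb 2 p + p * Real.logb 2 m - p * Real.logb 2 q - p * Real.logb 2 r := by
  have h2 : (0:ℝ) < Real.log 2 := Real.log_pos one_lt_two
  have hq0 : 0 ≤ q := le_trans hp hq
  have hr0 : 0 ≤ r := le_trans hp hr
  have hm0 : 0 ≤ m := le_trans hq0 hm
  rcases eq_or_lt_of_le hp with hp0 | hp0
  · rw [← hp0]
    have hqrm : 0 ≤ q * r / m := div_nonneg (mul_nonneg hq0 hr0) hm0
    calc (0 - q * r / m) / Real.log 2 ≤ 0 :=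
          div_nonpos_of_nonpos_of_nonneg (by linarith) h2.le
      _ = 0 * Real.logb 2 0 + 0 * Real.logb 2 m - 0 * Real.logb 2 q - 0 * Real.logb 2 r := by
          ring
  · have hq' : 0 < q := lt_of_lt_of_le hp0 hq
    have hr' : 0 < r := lt_of_lt_of_le hp0 hr
    have hm' : 0 < m := lt_of_lt_of_le hq' hm
    have NL : p - q * r / m ≤ p * Real.log p + p * Real.log m - p * Real.log q - p * Real.log r := by
      have hlog := Real.log_le_sub_one_of_pos (show (0:ℝ) < (p * m / (q * r))⁻¹ by positivity)
      rw [Real.log_inv] at hlog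
      have hlog' : 1 - (q * r) / (p * m) ≤ Real.log (p * m / (q * r)) := by
        rw [show (p * m / (q * r))⁻¹ = q * r / (p * m) by rw [inv_div]] at hlog
        linarith
      have hmul := mul_le_mul_of_nonneg_left hlog' (le_of_lt hp0)
      have heq : p * (1 - q * r / (p * m)) = p - q * r / m := by
        field_simp
        try ring
      have hlogeq : Real.log (p * m / (q * r)) =
          Real.log p + Real.log m - Real.log q - Real.log r := by
        rw [Real.log_div (by positivity) (by positivity),
          Real.log_mul hp0.ne' hm'.ne', Real.log_mul hq'.ne' hr'.ne']
        ring
      rw [heq, hlogeq] at hmul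
      linarith [hmul]
    have hdiv := (div_le_div_iff_of_pos_right h2).mpr NL
    calc (p - q * r / m) / Real.log 2
        ≤ (p * Real.log p + p * Real.log m - p * Real.log q - p * Real.log r) / Real.log 2 := hdiv
      _ = p * Real.logb 2 p + p * Real.logb 2 m - p * Real.logb 2 q - p * Real.logb 2 r := by
          simp only [Real.logb]
          ring

lemma CMI_nonneg {A B C : Type*} [Fintype A] [DecidableEq A] [Fintype B] [DecidableEq B]
    [Fintype C] [DecidableEq C] (f : Ω → A) (g : Ω → B) (h : Ω → C) :
    0 ≤ CMI P f g h := by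
  classical
  set F := fun ω => (f ω, g ω, h ω) with hF
  set p : A × B × C → ℝ := fun t => pr P F t with hpdef
  set q : A × B × C → ℝ := fun t => pr P (fun ω => (f ω, h ω)) (t.1, t.2.2) with hqdef
  set r : A × B × C → ℝ := fun t => pr P (fun ω => (g ω, h ω)) (t.2.1, t.2.2) with hrdef
  set m : A × B × C → ℝ := fun t => pr P h t.2.2 with hmdef
  have sum3 : ∀ (G : A × B × C → ℝ), ∑ t, G t = ∑ a, ∑ b, ∑ c, G (a, b, c) := by
    intro G
    rw [Fintype.sum_prod_type]
    exact Finset.sum_congr rfl fun a _ => Fintype.sum_prod_type _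
  have swap23 : ∀ (G : A → B → C → ℝ), ∑ a, ∑ b, ∑ c, G a b c = ∑ a, ∑ c, ∑ b, G a b c :=
    fun G => Finset.sum_congr rfl fun a _ => Finset.sum_comm
  have rot : ∀ (G : A → B → C → ℝ), ∑ a, ∑ b, ∑ c, G a b c = ∑ b, ∑ c, ∑ a, G a b c := by
    intro G
    rw [Finset.sum_comm]
    exact Finset.sum_congr rfl fun b _ => Finset.sum_comm
  have rotc : ∀ (G : A → B → C → ℝ), ∑ a, ∑ b, ∑ c, G a b c = ∑ c, ∑ a, ∑ b, G a b c := by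
    intro G
    rw [rot, Finset.sum_comm]
    exact Finset.sum_congr rfl fun c _ => Finset.sum_comm
  have hH_fh : H P (fun ω => (f ω, h ω)) = - ∑ t, p t * Real.logb 2 (q t) := by
    unfold H
    congr 1
    rw [sum3 (fun t => p t * Real.logb 2 (q t)), swap23, Fintype.sum_prod_type]
    refine Finset.sum_congr rfl fun a _ => ?_
    refine Finset.sum_congr rfl fun c _ => ?_
    simp only [hpdef, hqdef, hF]
    rw [marg_snd P f g h a c, Finset.sum_mul]
  have hH_gh : H P (fun ω => (g ω, h ω)) = - ∑ t, p t * Real.logb 2 (r t) := by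
    unfold H
    congr 1
    rw [sum3 (fun t => p t * Real.logb 2 (r t)), rot, Fintype.sum_prod_type]
    refine Finset.sum_congr rfl fun b _ => ?_
    refine Finset.sum_congr rfl fun c _ => ?_
    simp only [hpdef, hrdef, hF]
    rw [marg_fst P f g h b c, Finset.sum_mul]
  have hH_h : H P h = - ∑ t, p t * Real.logb 2 (m t) := by
    unfold H
    congr 1
    rw [sum3 (fun t => p t * Real.logb 2 (m t)), rotc]
    refine Finset.sum_congr rfl fun c _ => ?_
    simp only [hpdef, hmdef, hF]
    rw [marg_pair P f g h c, Finset.sum_mul]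
    refine Finset.sum_congr rfl fun a _ => by rw [Finset.sum_mul]
  have hH_fgh : H P F = - ∑ t, p t * Real.logb 2 (p t) := rfl
  have hCMI : CMI P f g h = ∑ t, (p t * Real.logb 2 (p t) + p t * Real.logb 2 (m t)
      - p t * Real.logb 2 (q t) - p t * Real.logb 2 (r t)) := by
    unfold CMI
    rw [hH_fh, hH_gh, ← hF, hH_fgh, hH_h]
    rw [Finset.sum_sub_distrib, Finset.sum_sub_distrib, Finset.sum_add_distrib]
    ring
  have hterm : ∀ t : A × B × C, (p t - q t * r t / m t) / Real.log 2 ≤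
      p t * Real.logb 2 (p t) + p t * Real.logb 2 (m t)
      - p t * Real.logb 2 (q t) - p t * Real.logb 2 (r t) := by
    rintro ⟨a, b, c⟩
    exact gibbs_term _ _ _ _ (pr_nonneg P F _)
      (pr_le_pair_snd P f g h a b c) (pr_le_pair_fst P f g h a b c)
      (pr_pair_le P f h a c)
  have hsum_p : ∑ t, p t = 1 := sum_pr P F
  have hsum_s : ∑ t, q t * r t / m t = 1 := by
    rw [sum3 (fun t => q t * r t / m t), rotc]
    have hc : ∀ c : C, ∑ a, ∑ b, (q (a, b, c) * r (a, b, c) / m (a, b, c)) = pr P h c := by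
      intro c
      by_cases hmz : pr P h c = 0
      · rw [hmz]
        apply Finset.sum_eq_zero; intro a _
        apply Finset.sum_eq_zero; intro b _
        have hQ : q (a, b, c) = 0 := le_antisymm
          (by simpa [hqdef] using hmz ▸ pr_pair_le P f h a c) (pr_nonneg P _ _)
        simp [hQ]
      · simp only [hqdef, hrdef, hmdef]
        have step : ∀ a : A,
            ∑ b, pr P (fun ω => (f ω, h ω)) (a, c) * pr P (fun ω => (g ω, h ω)) (b, c) / pr P h c
            = pr P (fun ω => (f ω, h ω)) (a, c) := by
          intro a
          calc ∑ b, pr P (fun ω => (f ω, h ω)) (a, c) * pr P (fun ω => (g ω, h ω)) (b, c) / pr P h c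
              = pr P (fun ω => (f ω, h ω)) (a, c) / pr P h c
                  * ∑ b, pr P (fun ω => (g ω, h ω)) (b, c) := by
                rw [Finset.mul_sum]
                exact Finset.sum_congr rfl fun b _ => by ring
            _ = pr P (fun ω => (f ω, h ω)) (a, c) / pr P h c * pr P h c := by
                rw [← marg2 P g h c]
            _ = pr P (fun ω => (f ω, h ω)) (a, c) := div_mul_cancel₀ _ hmz
        rw [Finset.sum_congr rfl (fun a _ => step a)]
        exact (marg2 P f h c).symm
    rw [Finset.sum_congr rfl (fun c _ => hc c), ← sum_pr P h]
  rw [hCMI]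
  calc (0:ℝ) = ∑ t, (p t - q t * r t / m t) / Real.log 2 := by
        rw [← Finset.sum_div, Finset.sum_sub_distrib, hsum_p, hsum_s]
        simp
    _ ≤ _ := Finset.sum_le_sum fun t _ => hterm t

lemma H_unit : H P (fun _ : Ω => ()) = 0 := by
  unfold H pr
  simp [P.sum_one]

lemma MI_nonneg {A B : Type*} [Fintype A] [DecidableEq A] [Fintype B] [DecidableEq B]
    (f : Ω → A) (g : Ω → B) : 0 ≤ MI P f g := by
  have h := CMI_nonneg P f g (fun _ => ())
  simp only [CMI] at h
  have e1 : H P (fun ω => (f ω, ())) = H P f :=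
    H_comp_inj P (fun a => (a, ())) (fun x y hh => congrArg Prod.fst hh) f
  have e2 : H P (fun ω => (g ω, ())) = H P g :=
    H_comp_inj P (fun b => (b, ())) (fun x y hh => congrArg Prod.fst hh) g
  have e3 : H P (fun ω => (f ω, g ω, ())) = H P (fun ω => (f ω, g ω)) :=
    H_comp_inj P (fun u : A × B => (u.1, u.2, ()))
      (fun x y hh => by cases x; cases y; simp [Prod.ext_iff] at hh ⊢; tauto) (fun ω => (f ω, g ω))
  rw [e1, e2, e3, H_unit] at h
  unfold MI
  linarith

lemma Hcond_mono {A B C : Type*} [Fintype A] [DecidableEq A] [Fintype B] [DecidableEq B]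
    [Fintype C] [DecidableEq C] (f : Ω → A) (g : Ω → B) (ρ : B → C) (g' : Ω → C)
    (hg' : ∀ ω, g' ω = ρ (g ω)) : Hcond P f g ≤ Hcond P f g' := by
  have hgg : g' = fun ω => ρ (g ω) := funext hg'
  subst hgg
  have h := CMI_nonneg P f g (fun ω => ρ (g ω))
  simp only [CMI] at h
  have e1 : H P (fun ω => (g ω, ρ (g ω))) = H P g :=
    H_comp_inj P (fun b => (b, ρ b)) (fun x y hh => congrArg Prod.fst hh) g
  have e2 : H P (fun ω => (f ω, g ω, ρ (g ω))) = H P (fun ω => (f ω, g ω)) :=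
    H_comp_inj P (fun u : A × B => (u.1, u.2, ρ u.2))
      (fun x y hh => by cases x; cases y; simp [Prod.ext_iff] at hh ⊢; tauto) (fun ω => (f ω, g ω))
  rw [e1, e2] at h
  unfold Hcond
  linarith

end Aux

/-- The tuple X_(ℬ) = {X_𝒜 : 𝒜 ∈ ℬ}. -/
def tup {Ω 𝒳 : Type} {L : ℕ} (XA : Finset (Fin L) → Ω → 𝒳)
    (B : Finset (Finset (Fin L))) : Ω → ({A : Finset (Fin L) // A ∈ B} → 𝒳) :=
  fun ω A => XA A.1 ω

/-- The set function ψ of the VKG region. -/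
noncomputable def psi {Ω 𝒳0 𝒳 : Type} {L : ℕ} [Fintype Ω] [Fintype 𝒳0] [DecidableEq 𝒳0]
    [Fintype 𝒳] [DecidableEq 𝒳] (P : FinProb Ω) (Xr : Ω → 𝒳0)
    (XA : Finset (Fin L) → Ω → 𝒳) (K : Finset (Fin L)) : ℝ :=
  ((K.card : ℝ) - 1) * MI P Xr (XA ∅)
    - Hcond P (tup XA K.powerset) Xr
    + ∑ A ∈ K.powerset, Hcond P (XA A) (tup XA (A.powerset.erase A))

section Main

variable {Ω 𝒳0 𝒳 : Type} {L : ℕ} [Fintype Ω] [Fintype 𝒳0] [DecidableEq 𝒳0]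
    [Fintype 𝒳] [DecidableEq 𝒳]

lemma H_tup_insert (P : FinProb Ω) {R : Type} [Fintype R] [DecidableEq R]
    (XA : Finset (Fin L) → Ω → 𝒳) (r : Ω → R) (A₀ : Finset (Fin L))
    (B' : Finset (Finset (Fin L))) (hA₀ : A₀ ∉ B') :
    H P (fun ω => (tup XA (insert A₀ B') ω, r ω))
      = H P (fun ω => (XA A₀ ω, tup XA B' ω, r ω)) := by
  classical
  set φ : 𝒳 × ({A : Finset (Fin L) // A ∈ B'} → 𝒳) × R
      → ({A : Finset (Fin L) // A ∈ insert A₀ B'} → 𝒳) × R :=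
    fun u => (fun A => if h : A.1 = A₀ then u.1
      else u.2.1 ⟨A.1, by
        rcases Finset.mem_insert.mp A.2 with h' | h'
        · exact absurd h' h
        · exact h'⟩, u.2.2) with hφ
  have hinj : Function.Injective φ := by
    rintro ⟨x1, x2, x3⟩ ⟨y1, y2, y3⟩ hh
    have hfst := congrArg Prod.fst hh
    have hsnd := congrArg Prod.snd hh
    simp only [hφ] at hfst hsnd
    have h1 : x1 = y1 := by
      have := congrFun hfst ⟨A₀, Finset.mem_insert_self _ _⟩
      simpa using this
    have h2 : x2 = y2 := by
      funext A
      have := congrFun hfst ⟨A.1, Finset.mem_insert_of_mem A.2⟩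
      have hne : A.1 ≠ A₀ := fun he => hA₀ (he ▸ A.2)
      simpa [dif_neg hne] using this
    have h3 : x3 = y3 := hsnd
    simp [h1, h2, h3]
  have hcomp : (fun ω => (tup XA (insert A₀ B') ω, r ω))
      = fun ω => φ (XA A₀ ω, tup XA B' ω, r ω) := by
    funext ω
    refine Prod.ext ?_ rfl
    funext A
    simp only [hφ, tup]
    by_cases hA : A.1 = A₀
    · rw [dif_pos hA, hA]
    · rw [dif_neg hA]
  rw [hcomp]
  exact H_comp_inj P φ hinj (fun ω => (XA A₀ ω, tup XA B' ω, r ω))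

lemma key (P : FinProb Ω) (Xr : Ω → 𝒳0) (XA : Finset (Fin L) → Ω → 𝒳) (n : ℕ) :
    ∀ (B₂ B₁ : Finset (Finset (Fin L))), (B₂ \ B₁).card = n → B₁ ⊆ B₂ →
    (∀ A ∈ B₂, ∀ A', A' ⊆ A → A' ∈ B₂) → (∀ A ∈ B₁, ∀ A', A' ⊆ A → A' ∈ B₁) →
    H P (fun ω => (tup XA B₂ ω, Xr ω)) - H P (fun ω => (tup XA B₁ ω, Xr ω))
      ≤ ∑ A ∈ B₂ \ B₁, Hcond P (XA A) (tup XA (A.powerset.erase A)) := by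
  induction n with
  | zero =>
    intro B₂ B₁ hcard hsub hc2 hc1
    have hempty : B₂ \ B₁ = ∅ := Finset.card_eq_zero.mp hcard
    have heq : B₂ = B₁ := le_antisymm (Finset.sdiff_eq_empty_iff_subset.mp hempty) hsub
    rw [heq]
    simp [Finset.sdiff_self]
  | succ n ih =>
    intro B₂ B₁ hcard hsub hc2 hc1
    have hne : (B₂ \ B₁).Nonempty := Finset.card_pos.mp (by omega)
    obtain ⟨A₀, hA₀, hmax⟩ := Finset.exists_max_image (B₂ \ B₁) Finset.card hne
    obtain ⟨hA₀2, hA₀1⟩ := Finset.mem_sdiff.mp hA₀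
    set B₂' := B₂.erase A₀ with hB₂'
    have hsub' : B₁ ⊆ B₂' := fun x hx =>
      Finset.mem_erase.mpr ⟨fun he => hA₀1 (he ▸ hx), hsub hx⟩
    have hc2' : ∀ A ∈ B₂', ∀ A', A' ⊆ A → A' ∈ B₂' := by
      intro A hA A' hA'
      have hA2 := Finset.mem_of_mem_erase hA
      have hA'2 := hc2 A hA2 A' hA'
      refine Finset.mem_erase.mpr ⟨?_, hA'2⟩
      intro he
      subst he
      have hAne : A ≠ A' := (Finset.mem_erase.mp hA).1
      have hAB : A ∈ B₂ \ B₁ := by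
        refine Finset.mem_sdiff.mpr ⟨hA2, fun hAB1 => hA₀1 (hc1 A hAB1 A' hA')⟩
      have hlt : A'.card < A.card :=
        Finset.card_lt_card (lt_of_le_of_ne hA' (fun he2 => hAne he2.symm))
      exact absurd (hmax A hAB) (by omega)
    have hdiffeq : B₂' \ B₁ = (B₂ \ B₁).erase A₀ := by
      ext x
      simp only [hB₂', Finset.mem_sdiff, Finset.mem_erase]
      tauto
    have hdiffcard : (B₂' \ B₁).card = n := by
      rw [hdiffeq, Finset.card_erase_of_mem hA₀, hcard]
      omega
    have hpow : A₀.powerset.erase A₀ ⊆ B₂' := by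
      intro A' hA'
      obtain ⟨hne', hmem⟩ := Finset.mem_erase.mp hA'
      exact Finset.mem_erase.mpr ⟨hne', hc2 A₀ hA₀2 A' (Finset.mem_powerset.mp hmem)⟩
    have hins : B₂ = insert A₀ B₂' := (Finset.insert_erase hA₀2).symm
    have hE : H P (fun ω => (tup XA B₂ ω, Xr ω))
        = H P (fun ω => (XA A₀ ω, tup XA B₂' ω, Xr ω)) := by
      rw [hins]
      exact H_tup_insert P XA Xr A₀ B₂' (Finset.notMem_erase _ _)
    have hstep1 : H P (fun ω => (tup XA B₂ ω, Xr ω)) - H P (fun ω => (tup XA B₂' ω, Xr ω))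
        = Hcond P (XA A₀) (fun ω => (tup XA B₂' ω, Xr ω)) := by
      rw [hE]; rfl
    have hstep2 : Hcond P (XA A₀) (fun ω => (tup XA B₂' ω, Xr ω))
        ≤ Hcond P (XA A₀) (tup XA (A₀.powerset.erase A₀)) := by
      exact Hcond_mono P (XA A₀) (fun ω => (tup XA B₂' ω, Xr ω))
        (fun (u : ({A : Finset (Fin L) // A ∈ B₂'} → 𝒳) × 𝒳0)
          (A : {A : Finset (Fin L) // A ∈ A₀.powerset.erase A₀}) => u.1 ⟨A.1, hpow A.2⟩)
        (tup XA (A₀.powerset.erase A₀)) (fun ω => rfl)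
    have hIH := ih B₂' B₁ hdiffcard hsub' hc2' hc1
    have hsum : ∑ A ∈ B₂ \ B₁, Hcond P (XA A) (tup XA (A.powerset.erase A))
        = Hcond P (XA A₀) (tup XA (A₀.powerset.erase A₀))
          + ∑ A ∈ B₂' \ B₁, Hcond P (XA A) (tup XA (A.powerset.erase A)) := by
      rw [hdiffeq]
      exact (Finset.add_sum_erase _ _ hA₀).symm
    linarith

end Main

/-- ψ is nondecreasing. -/
theorem stmt5 {Ω 𝒳0 𝒳 : Type} {L : ℕ} [Fintype Ω] [Fintype 𝒳0] [DecidableEq 𝒳0]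
    [Fintype 𝒳] [DecidableEq 𝒳] (P : FinProb Ω) (Xr : Ω → 𝒳0)
    (XA : Finset (Fin L) → Ω → 𝒳) (S T : Finset (Fin L)) (hST : S ⊂ T) :
    psi P Xr XA S ≤ psi P Xr XA T := by
  have hsub : S ⊆ T := hST.subset
  have hpow : S.powerset ⊆ T.powerset := Finset.powerset_mono.mpr hsub
  have hclosedT : ∀ A ∈ T.powerset, ∀ A', A' ⊆ A → A' ∈ T.powerset := fun A hA A' hA' =>
    Finset.mem_powerset.mpr (le_trans hA' (Finset.mem_powerset.mp hA))
  have hclosedS : ∀ A ∈ S.powerset, ∀ A', A' ⊆ A → A' ∈ S.powerset := fun A hA A' hA' =>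
    Finset.mem_powerset.mpr (le_trans hA' (Finset.mem_powerset.mp hA))
  have hkey := key P Xr XA (T.powerset \ S.powerset).card T.powerset S.powerset rfl hpow
    hclosedT hclosedS
  have hsum : ∑ A ∈ T.powerset, Hcond P (XA A) (tup XA (A.powerset.erase A))
      = ∑ A ∈ T.powerset \ S.powerset, Hcond P (XA A) (tup XA (A.powerset.erase A))
        + ∑ A ∈ S.powerset, Hcond P (XA A) (tup XA (A.powerset.erase A)) :=
    (Finset.sum_sdiff hpow).symm
  have hMI : 0 ≤ MI P Xr (XA ∅) := MI_nonneg P Xr (XA ∅)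
  have hcard : (S.card : ℝ) ≤ T.card := Nat.cast_le.mpr (Finset.card_le_card hsub)
  have hMImul : ((S.card : ℝ) - 1) * MI P Xr (XA ∅) ≤ ((T.card : ℝ) - 1) * MI P Xr (XA ∅) :=
    mul_le_mul_of_nonneg_right (by linarith) hMI
  unfold psi Hcond
  unfold Hcond at hkey hsum
  linarith
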